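/- If G is a finite group with a non-normal maximal subgroup M, then |G : G'| ≤ |M : M'|. In particular, every finite top group is nilpotent. -/

import Mathlib

def IsTopGroup (G : Type*) [Group G] : Prop :=
  ∀ H : Subgroup G, H ≠ ⊤ →
    Nat.card (Abelianization H) < Nat.card (Abelianization G)

open commutatorElement in
lemma normal_of_commutator_le {G : Type*} [Group G] {M : Subgroup G}
    (h : commutator G ≤ M) : M.Normal := by
  constructor
  intro m hm g
  have : ⁅g, m⁆ ∈ commutator G := by
    rw [commutator_def]
    exact Subgroup.commutator_mem_commutator (Subgroup.mem_top g) (Subgroup.mem_top m)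
  have h2 : ⁅g, m⁆ * m ∈ M := M.mul_mem (h this) hm
  simpa [commutatorElement_def, mul_assoc] using h2

lemma abelianization_card {G : Type*} [Group G] :
    Nat.card (Abelianization G) = (commutator G).index :=
  (Subgroup.index_eq_card (commutator G)).symm

/-- If `M` is a non-normal maximal subgroup of a finite group `G`, then
`|G : G'| ≤ |M : M'|`; in particular every finite top group is nilpotent. -/
theorem top_group_nilpotent (G : Type*) [Group G] [Finite G] :
    (∀ M : Subgroup G, IsCoatom M → ¬ M.Normal →
      Nat.card (Abelianization G) ≤ Nat.card (Abelianization M)) ∧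
    (IsTopGroup G → Group.IsNilpotent G) := by
  have key : ∀ M : Subgroup G, IsCoatom M → ¬ M.Normal →
      Nat.card (Abelianization G) ≤ Nat.card (Abelianization M) := by
    intro M hM hn
    have hNM : ¬ commutator G ≤ M := fun h => hn (normal_of_commutator_le h)
    have hsup : commutator G ⊔ M = ⊤ := by
      refine hM.2 _ ?_
      rw [sup_comm]
      exact left_lt_sup.mpr hNM
    have h1 : (commutator G).index = ((commutator G).subgroupOf M).index := by
      rw [← Subgroup.relIndex, ← Subgroup.relIndex_sup_left, hsup,
        Subgroup.relIndex_top_right]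
    have hle : commutator (↥M) ≤ (commutator G).subgroupOf M := by
      rw [Subgroup.subgroupOf, ← Subgroup.map_le_iff_le_comap, commutator_def,
        Subgroup.map_commutator, commutator_def]
      exact Subgroup.commutator_mono le_top le_top
    have hdvd := Subgroup.index_dvd_of_le hle
    rw [abelianization_card, abelianization_card, h1]
    exact Nat.le_of_dvd (Nat.pos_of_ne_zero (Subgroup.index_ne_zero_of_finite)) hdvd
  refine ⟨key, fun htop => ?_⟩
  refine (isNilpotent_of_finite_tfae.out 0 2).mpr ?_
  intro H hH
  by_contra hn
  exact absurd (key H hH hn) (not_le.mpr (htop H hH.1))
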